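/- For a contraction T with constant θ ∈ (0,1) and fixed point p, the K iteration satisfies ‖xₙ₊₁ - p‖ ≤ ‖x₀ - p‖ · θ^{3(n+1)} · exp(-(1-θ)∑_{k=0}^n αₖβₖ). -/

import Mathlib

lemma comb_norm {X : Type*} [NormedAddCommGroup X] [NormedSpace ℝ X]
    (a b p : X) (t : ℝ) (h0 : 0 ≤ t) (h1 : t ≤ 1) :
    ‖(1 - t) • a + t • b - p‖ ≤ (1 - t) * ‖a - p‖ + t * ‖b - p‖ := by
  have : (1 - t) • a + t • b - p = (1 - t) • (a - p) + t • (b - p) := by module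
  rw [this]
  calc ‖(1 - t) • (a - p) + t • (b - p)‖ ≤ ‖(1 - t) • (a - p)‖ + ‖t • (b - p)‖ :=
        norm_add_le _ _
    _ = (1 - t) * ‖a - p‖ + t * ‖b - p‖ := by
        rw [norm_smul, norm_smul, Real.norm_eq_abs, Real.norm_eq_abs,
          abs_of_nonneg (by linarith), abs_of_nonneg h0]

theorem stmt_4 {X : Type*} [NormedAddCommGroup X] [NormedSpace ℝ X] [CompleteSpace X]
    (C : Set X) (hCne : C.Nonempty) (hCcl : IsClosed C) (hCcv : Convex ℝ C)
    (T : X → X) (hTC : ∀ x ∈ C, T x ∈ C) (θ : ℝ) (hθ : θ ∈ Set.Ioo (0:ℝ) 1)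
    (hT : ∀ x ∈ C, ∀ y ∈ C, ‖T x - T y‖ ≤ θ * ‖x - y‖)
    (p : X) (hpC : p ∈ C) (hp : T p = p)
    (α β : ℕ → ℝ) (hα : ∀ n, α n ∈ Set.Icc (0:ℝ) 1) (hβ : ∀ n, β n ∈ Set.Icc (0:ℝ) 1)
    (x z y : ℕ → X) (hx0 : x 0 ∈ C)
    (hz : ∀ n, z n = (1 - β n) • x n + β n • T (x n))
    (hy : ∀ n, y n = T ((1 - α n) • T (x n) + α n • T (z n)))
    (hx : ∀ n, x (n + 1) = T (y n)) :
    ∀ n, ‖x (n + 1) - p‖ ≤ ‖x 0 - p‖ * θ ^ (3 * (n + 1)) *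
      Real.exp (-(1 - θ) * ∑ k ∈ Finset.range (n + 1), α k * β k) := by
  obtain ⟨hθ0, hθ1⟩ := hθ
  -- membership
  have xC : ∀ n, x n ∈ C := by
    intro n
    induction n with
    | zero => exact hx0
    | succ m ih =>
      have hzm : z m ∈ C := by
        rw [hz m]
        exact hCcv ih (hTC _ ih) (by linarith [(hβ m).2]) (hβ m).1 (by ring)
      have hwm : (1 - α m) • T (x m) + α m • T (z m) ∈ C :=
        hCcv (hTC _ ih) (hTC _ hzm) (by linarith [(hα m).2]) (hα m).1 (by ring)
      rw [hx m, hy m]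
      exact hTC _ (hTC _ hwm)
  have zC : ∀ n, z n ∈ C := by
    intro n; rw [hz n]
    exact hCcv (xC n) (hTC _ (xC n)) (by linarith [(hβ n).2]) (hβ n).1 (by ring)
  have wC : ∀ n, (1 - α n) • T (x n) + α n • T (z n) ∈ C := fun n =>
    hCcv (hTC _ (xC n)) (hTC _ (zC n)) (by linarith [(hα n).2]) (hα n).1 (by ring)
  -- one-step estimate
  have key : ∀ n, ‖x (n + 1) - p‖ ≤ θ ^ 3 * (1 - α n * β n * (1 - θ)) * ‖x n - p‖ := by
    intro n
    have hTxn : ‖T (x n) - p‖ ≤ θ * ‖x n - p‖ := by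
      conv_lhs => rw [← hp]
      exact hT _ (xC n) _ hpC
    have hzb : ‖z n - p‖ ≤ (1 - β n * (1 - θ)) * ‖x n - p‖ := by
      rw [hz n]
      calc ‖(1 - β n) • x n + β n • T (x n) - p‖
          ≤ (1 - β n) * ‖x n - p‖ + β n * ‖T (x n) - p‖ :=
            comb_norm _ _ _ _ (hβ n).1 (hβ n).2
        _ ≤ (1 - β n) * ‖x n - p‖ + β n * (θ * ‖x n - p‖) := by
            have := (hβ n).1
            nlinarith
        _ = (1 - β n * (1 - θ)) * ‖x n - p‖ := by ring
    have hTzn : ‖T (z n) - p‖ ≤ θ * ((1 - β n * (1 - θ)) * ‖x n - p‖) := by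
      conv_lhs => rw [← hp]
      calc ‖T (z n) - T p‖ ≤ θ * ‖z n - p‖ := hT _ (zC n) _ hpC
        _ ≤ θ * ((1 - β n * (1 - θ)) * ‖x n - p‖) := by
            exact mul_le_mul_of_nonneg_left hzb (le_of_lt hθ0)
    have hwb : ‖(1 - α n) • T (x n) + α n • T (z n) - p‖
        ≤ θ * (1 - α n * β n * (1 - θ)) * ‖x n - p‖ := by
      calc ‖(1 - α n) • T (x n) + α n • T (z n) - p‖
          ≤ (1 - α n) * ‖T (x n) - p‖ + α n * ‖T (z n) - p‖ :=
            comb_norm _ _ _ _ (hα n).1 (hα n).2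
        _ ≤ (1 - α n) * (θ * ‖x n - p‖) + α n * (θ * ((1 - β n * (1 - θ)) * ‖x n - p‖)) := by
            have h1 := (hα n).1
            have h2 := (hα n).2
            nlinarith
        _ = θ * (1 - α n * β n * (1 - θ)) * ‖x n - p‖ := by ring
    have hyb : ‖y n - p‖ ≤ θ * (θ * (1 - α n * β n * (1 - θ)) * ‖x n - p‖) := by
      rw [hy n]
      conv_lhs => rw [← hp]
      calc ‖T _ - T p‖ ≤ θ * ‖(1 - α n) • T (x n) + α n • T (z n) - p‖ := hT _ (wC n) _ hpC
        _ ≤ θ * (θ * (1 - α n * β n * (1 - θ)) * ‖x n - p‖) :=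
            mul_le_mul_of_nonneg_left hwb (le_of_lt hθ0)
    rw [hx n]
    conv_lhs => rw [← hp]
    have yC : y n ∈ C := by rw [hy n]; exact hTC _ (wC n)
    calc ‖T (y n) - T p‖ ≤ θ * ‖y n - p‖ := hT _ yC _ hpC
      _ ≤ θ * (θ * (θ * (1 - α n * β n * (1 - θ)) * ‖x n - p‖)) :=
          mul_le_mul_of_nonneg_left hyb (le_of_lt hθ0)
      _ = θ ^ 3 * (1 - α n * β n * (1 - θ)) * ‖x n - p‖ := by ring
  -- factor bound
  have hfac : ∀ n, (1 - α n * β n * (1 - θ)) ≤ Real.exp (-(1 - θ) * (α n * β n)) := by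
    intro n
    have := Real.add_one_le_exp (-(1 - θ) * (α n * β n))
    linarith
  have hfac0 : ∀ n, 0 ≤ 1 - α n * β n * (1 - θ) := by
    intro n
    have h1 := (hα n).1; have h2 := (hα n).2
    have h3 := (hβ n).1; have h4 := (hβ n).2
    have hab : α n * β n ≤ 1 := mul_le_one₀ h2 h3 h4
    nlinarith [mul_nonneg h1 h3]
  intro n
  induction n with
  | zero =>
    calc ‖x 1 - p‖ ≤ θ ^ 3 * (1 - α 0 * β 0 * (1 - θ)) * ‖x 0 - p‖ := key 0
      _ ≤ θ ^ 3 * Real.exp (-(1 - θ) * (α 0 * β 0)) * ‖x 0 - p‖ :=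
          mul_le_mul_of_nonneg_right
            (mul_le_mul_of_nonneg_left (hfac 0) (by positivity)) (norm_nonneg _)
      _ = ‖x 0 - p‖ * θ ^ (3 * (0 + 1)) *
          Real.exp (-(1 - θ) * ∑ k ∈ Finset.range (0 + 1), α k * β k) := by
          simp; ring
  | succ m ih =>
    have h1 : ‖x (m + 2) - p‖ ≤ θ ^ 3 * (1 - α (m+1) * β (m+1) * (1 - θ)) * ‖x (m+1) - p‖ :=
      key (m + 1)
    have h2 : θ ^ 3 * (1 - α (m+1) * β (m+1) * (1 - θ)) * ‖x (m+1) - p‖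
        ≤ θ ^ 3 * Real.exp (-(1 - θ) * (α (m+1) * β (m+1))) *
          (‖x 0 - p‖ * θ ^ (3 * (m + 1)) *
            Real.exp (-(1 - θ) * ∑ k ∈ Finset.range (m + 1), α k * β k)) := by
      have hA : θ ^ 3 * (1 - α (m+1) * β (m+1) * (1 - θ))
          ≤ θ ^ 3 * Real.exp (-(1 - θ) * (α (m+1) * β (m+1))) := by
        exact mul_le_mul_of_nonneg_left (hfac _) (by positivity)
      have hB : 0 ≤ θ ^ 3 * (1 - α (m+1) * β (m+1) * (1 - θ)) := by
        have := hfac0 (m+1); positivity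
      have hC : 0 ≤ ‖x 0 - p‖ * θ ^ (3 * (m + 1)) *
          Real.exp (-(1 - θ) * ∑ k ∈ Finset.range (m + 1), α k * β k) := by positivity
      exact mul_le_mul hA ih (norm_nonneg _) (by positivity)
    calc ‖x (m + 1 + 1) - p‖ ≤ _ := h1
      _ ≤ _ := h2
      _ = ‖x 0 - p‖ * θ ^ (3 * (m + 1 + 1)) *
          Real.exp (-(1 - θ) * ∑ k ∈ Finset.range (m + 1 + 1), α k * β k) := by
          have h3 : 3 * (m + 1 + 1) = 3 * (m + 1) + 3 := by ring
          conv_rhs => rw [Finset.sum_range_succ]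
          rw [show -(1 - θ) * (∑ k ∈ Finset.range (m + 1), α k * β k + α (m+1) * β (m+1))
              = -(1 - θ) * ∑ k ∈ Finset.range (m + 1), α k * β k
                + -(1 - θ) * (α (m+1) * β (m+1)) from by ring,
            Real.exp_add, h3, pow_add]
          ring
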